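/- Let w, v ∈ W and let s = s_i be a simple reflection with vs > v in the Bruhat order. Then p(w, vs) = ((t1+t2)/(v E(α_s)))·p(w,v) − t1 t2 · p(ws,v) if ws > w, and p(w, vs) = (t1+t2)(1/(v E(α_s)) + 1)·p(w,v) + p(ws,v) if ws < w, where v E(α_s) := E(v(α_s)) = v[E(α_s)] and α_s = α_i is the simple root of s. -/

import Mathlib

open CoxeterSystem

/-- `E(λ) = e^{-λ} - 1`. -/
noncomputable def Eelt {Λ : Type*} [AddCommGroup Λ] {K : Type*} [Field K]
    (exp : Multiplicative Λ →* Kˣ) (lam : Λ) : K :=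
  ((exp (Multiplicative.ofAdd (-lam)) : Kˣ) : K) - 1

/-- The Bruhat order on `W`: `u ≤ v` iff there is a chain from `u` to `v` each of whose
steps multiplies on the right by a reflection while increasing the length. -/
def bruhatLE {r : ℕ} {W : Type*} [Group W] {M : CoxeterMatrix (Fin r)}
    (cs : CoxeterSystem M W) (u v : W) : Prop :=
  Relation.ReflTransGen
    (fun a b => (∃ t, cs.IsReflection t ∧ b = a * t) ∧ cs.length a < cs.length b) u v

/-- The strict Bruhat order on `W`. -/
def bruhatLT {r : ℕ} {W : Type*} [Group W] {M : CoxeterMatrix (Fin r)}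
    (cs : CoxeterSystem M W) (u v : W) : Prop :=
  Relation.TransGen
    (fun a b => (∃ t, cs.IsReflection t ∧ b = a * t) ∧ cs.length a < cs.length b) u v

/-- `p(w,v)`: the coefficient of `h_w` in the expansion `Y_v = ∑_w p(w,v) h_w` of the
Yang–Baxter basis element `Y_v` in the standard basis (`hb w = h w`). -/
noncomputable def pCoeff {W : Type*} {K : Type*} [Field K] {H : Type*} [Ring H] [Algebra K H]
    (hb : Module.Basis W K H) (Y : W → H) (w v : W) : K :=
  hb.repr (Y v) w

private lemma bruhatLT_length_lt {r : ℕ} {W : Type*} [Group W] {M : CoxeterMatrix (Fin r)}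
    {cs : CoxeterSystem M W} {u v : W} (h : bruhatLT cs u v) :
    cs.length u < cs.length v := by
  induction h with
  | single h => exact h.2
  | tail _ h ih => exact ih.trans h.2

private lemma bruhatLT_mul_simple_iff {r : ℕ} {W : Type*} [Group W] {M : CoxeterMatrix (Fin r)}
    (cs : CoxeterSystem M W) (w : W) (i : Fin r) :
    bruhatLT cs w (w * cs.simple i) ↔
      cs.length (w * cs.simple i) = cs.length w + 1 := by
  constructor
  · intro hlt
    have := bruhatLT_length_lt hlt
    rcases cs.length_mul_simple w i with h | h
    · exact h
    · omega
  · intro hl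
    exact Relation.TransGen.single ⟨⟨cs.simple i, cs.isReflection_simple i, rfl⟩, by omega⟩

/-- right recurrence for `p`: if `vs > v` then
`p(w,vs) = ((t1+t2)/(v E(α_s)))·p(w,v) − t1t2·p(ws,v)` if `ws > w`, and
`p(w,vs) = (t1+t2)(1/(v E(α_s)) + 1)·p(w,v) + p(ws,v)` if `ws < w`. -/
theorem pCoeff_right_recurrence
    {r : ℕ} {W : Type*} [Group W] [Fintype W] {M : CoxeterMatrix (Fin r)}
    (cs : CoxeterSystem M W)
    {Λ : Type*} [AddCommGroup Λ] (wΛ : W →* Multiplicative (AddAut Λ)) (α : Fin r → Λ)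
    (coroot : Fin r → (Λ →+ ℤ))
    (hact : ∀ (i : Fin r) (lam : Λ), Multiplicative.toAdd (wΛ (cs.simple i)) lam = lam - (coroot i lam) • α i)
    (hαα : ∀ i : Fin r, coroot i (α i) = 2)
    (hindep : LinearIndependent ℤ α)
    (hcart : ∀ i j : Fin r, i ≠ j →
      (M.M i j = 2 ∧ coroot i (α j) = 0 ∧ coroot j (α i) = 0) ∨
      (M.M i j = 3 ∧ coroot i (α j) = -1 ∧ coroot j (α i) = -1) ∨
      (M.M i j = 4 ∧ coroot i (α j) * coroot j (α i) = 2 ∧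
        coroot i (α j) < 0 ∧ coroot j (α i) < 0) ∨
      (M.M i j = 6 ∧ coroot i (α j) * coroot j (α i) = 3 ∧
        coroot i (α j) < 0 ∧ coroot j (α i) < 0))
    {K : Type*} [Field K] (exp : Multiplicative Λ →* Kˣ)
    (hexp_inj : Function.Injective exp)
    (t1 t2 : K) (wK : W →* RingAut K)
    (hwexp : ∀ (w : W) (lam : Λ),
      wK w ((exp (Multiplicative.ofAdd lam) : Kˣ) : K)
        = ((exp (Multiplicative.ofAdd (Multiplicative.toAdd (wΛ w) lam)) : Kˣ) : K))
    (hwt1 : ∀ w : W, wK w t1 = t1) (hwt2 : ∀ w : W, wK w t2 = t2)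
    {H : Type*} [Ring H] [Algebra K H]
    (h : W → H) (hb : Module.Basis W K H)
    (hbasis : ∀ w : W, hb w = h w)
    (hone : h 1 = 1)
    (hmul : ∀ u v : W, cs.length (u * v) = cs.length u + cs.length v →
      h (u * v) = h u * h v)
    (hquad : ∀ i : Fin r,
      (h (cs.simple i) - algebraMap K H t1) * (h (cs.simple i) - algebraMap K H t2) = 0)
    (Y : W → H) (hY1 : Y 1 = 1)
    (hYrec : ∀ (w : W) (i : Fin r), cs.length (w * cs.simple i) = cs.length w + 1 →
      Y (w * cs.simple i)
        = Y w * (h (cs.simple i) + algebraMap K H ((t1 + t2) / wK w (Eelt exp (α i)))))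
    (w v : W) (i : Fin r)
    (hvs : bruhatLT cs v (v * cs.simple i)) :
    (bruhatLT cs w (w * cs.simple i) →
      pCoeff hb Y w (v * cs.simple i)
        = (t1 + t2) / wK v (Eelt exp (α i)) * pCoeff hb Y w v
          - t1 * t2 * pCoeff hb Y (w * cs.simple i) v) ∧
    (bruhatLT cs (w * cs.simple i) w →
      pCoeff hb Y w (v * cs.simple i)
        = (t1 + t2) * (1 / wK v (Eelt exp (α i)) + 1) * pCoeff hb Y w v
          + pCoeff hb Y (w * cs.simple i) v) := by
  classical
  set s := cs.simple i with hs
  have hvlen : cs.length (v * s) = cs.length v + 1 :=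
    (bruhatLT_mul_simple_iff cs v i).mp hvs
  have hwne : w ≠ w * s := by
    intro h1
    have hsne : s = 1 := mul_left_cancel (a := w) (by rw [← h1, mul_one])
    have := cs.length_simple i
    rw [← hs, hsne, cs.length_one] at this
    omega
  have hss : ∀ u : W, u * s * s = u := by
    intro u
    rw [mul_assoc, hs, cs.simple_mul_simple_self, mul_one]
  -- quadratic relation
  have hsq : h s * h s = (t1 + t2) • h s - (t1 * t2) • (1 : H) := by
    have hq := hquad i
    rw [sub_mul, mul_sub, mul_sub] at hq
    have h1 : h s * h s - h s * algebraMap K H t2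
        = algebraMap K H t1 * h s - algebraMap K H t1 * algebraMap K H t2 :=
      sub_eq_zero.mp hq
    have h2 : h s * h s
        = (algebraMap K H t1 * h s - algebraMap K H t1 * algebraMap K H t2)
          + h s * algebraMap K H t2 := sub_eq_iff_eq_add.mp h1
    rw [h2, ← Algebra.commutes t2 (h s), ← (algebraMap K H).map_mul,
      ← Algebra.smul_def, ← Algebra.smul_def, Algebra.algebraMap_eq_smul_one]
    module
  set p : W → K := fun u => hb.repr (Y v) u with hp
  have hrepr : ∀ u w' : W, hb.repr (hb u) w' = if u = w' then 1 else 0 := by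
    intro u w'
    rw [hb.repr_self, Finsupp.single_apply]
  have caseA : ∀ u : W, cs.length (u * s) = cs.length u + 1 → hb u * h s = hb (u * s) := by
    intro u hu
    have hls : cs.length s = 1 := by rw [hs]; exact cs.length_simple i
    rw [hbasis, hbasis, ← hmul u s (by rw [hu, hls])]
  have caseB : ∀ u : W, cs.length (u * s) + 1 = cs.length u →
      hb u * h s = (t1 + t2) • hb u - (t1 * t2) • hb (u * s) := by
    intro u hu
    have hls : cs.length s = 1 := by rw [hs]; exact cs.length_simple i
    have hlen : cs.length ((u * s) * s) = cs.length (u * s) + cs.length s := by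
      rw [hss u, hls]
      omega
    have h1 : h u = h (u * s) * h s := by
      have := hmul (u * s) s hlen
      rwa [hss u] at this
    rw [hbasis, hbasis, h1, mul_assoc, hsq, mul_sub, mul_smul_comm,
      mul_smul_comm, mul_one, ← h1]
  have hexpand : hb.repr (Y v * h s) w = ∑ u, p u * hb.repr (hb u * h s) w := by
    conv_lhs => rw [← hb.sum_repr (Y v)]
    rw [Finset.sum_mul]
    simp_rw [smul_mul_assoc]
    rw [map_sum, Finset.sum_apply']
    simp [p]
  set c : K := (t1 + t2) / wK v (Eelt exp (α i)) with hc
  have hY : Y (v * s) = Y v * (h s + algebraMap K H c) := hYrec v i hvlen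
  have hmain : pCoeff hb Y w (v * s) = hb.repr (Y v * h s) w + c * p w := by
    show hb.repr (Y (v * s)) w = _
    rw [hY, mul_add, map_add]
    have hca : Y v * algebraMap K H c = c • Y v := by
      rw [Algebra.smul_def, Algebra.commutes]
    rw [hca, map_smul]
    simp [p, mul_comm]
  have hsum : ∑ u, p u * hb.repr (hb u * h s) w
      = p w * hb.repr (hb w * h s) w + p (w * s) * hb.repr (hb (w * s) * h s) w := by
    have hz : ∀ x ∈ Finset.univ, x ∉ ({w, w * s} : Finset W) →
        p x * hb.repr (hb x * h s) w = 0 := by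
      intro x _ hx
      simp only [Finset.mem_insert, Finset.mem_singleton, not_or] at hx
      obtain ⟨hx1, hx2⟩ := hx
      have hxs : x * s ≠ w := by
        intro hxw
        exact hx2 (by rw [← hxw, hss])
      rcases cs.length_mul_simple x i with hA | hB
      · rw [caseA x (by rwa [← hs] at hA), hrepr, if_neg hxs, mul_zero]
      · rw [caseB x (by rwa [← hs] at hB)]
        rw [map_sub, map_smul, map_smul, Finsupp.sub_apply, Finsupp.smul_apply,
          Finsupp.smul_apply, hrepr, hrepr, if_neg hx1, if_neg hxs]
        simp
    rw [← Finset.sum_subset (Finset.subset_univ ({w, w * s} : Finset W)) hz,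
      Finset.sum_pair hwne]
  constructor
  · intro hws
    have hA : cs.length (w * s) = cs.length w + 1 :=
      (bruhatLT_mul_simple_iff cs w i).mp hws
    have g1 : hb.repr (hb w * h s) w = 0 := by
      rw [caseA w hA, hrepr, if_neg (Ne.symm hwne)]
    have g2 : hb.repr (hb (w * s) * h s) w = -(t1 * t2) := by
      have hB : cs.length ((w * s) * s) + 1 = cs.length (w * s) := by
        rw [hss w]
        omega
      rw [caseB (w * s) hB, map_sub, map_smul, map_smul, Finsupp.sub_apply,
        Finsupp.smul_apply, Finsupp.smul_apply, hrepr, hrepr, hss,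
        if_neg (Ne.symm hwne), if_pos rfl]
      simp
    rw [hmain, hexpand, hsum, g1, g2]
    show _ = c * p w - t1 * t2 * hb.repr (Y v) (w * s)
    have : hb.repr (Y v) (w * s) = p (w * s) := rfl
    rw [this]
    ring
  · intro hws
    have hlt := bruhatLT_length_lt hws
    have hB : cs.length (w * s) + 1 = cs.length w := by
      rcases cs.length_mul_simple w i with hA | hB
      · rw [← hs] at hA; omega
      · rwa [← hs] at hB
    have g1 : hb.repr (hb w * h s) w = t1 + t2 := by
      rw [caseB w hB, map_sub, map_smul, map_smul, Finsupp.sub_apply,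
        Finsupp.smul_apply, Finsupp.smul_apply, hrepr, hrepr, if_pos rfl,
        if_neg (Ne.symm hwne)]
      simp
    have g2 : hb.repr (hb (w * s) * h s) w = 1 := by
      have hA : cs.length ((w * s) * s) = cs.length (w * s) + 1 := by
        rw [hss w]
        omega
      rw [caseA (w * s) hA, hss, hrepr, if_pos rfl]
    rw [hmain, hexpand, hsum, g1, g2]
    show _ = (t1 + t2) * (1 / wK v (Eelt exp (α i)) + 1) * p w + hb.repr (Y v) (w * s)
    have : hb.repr (Y v) (w * s) = p (w * s) := rfl
    rw [this, hc, div_eq_mul_inv, one_div]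
    ring
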